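/- Let p be an odd prime and x₁, x₂, x₃ ∈ F_p satisfy x₁ = x₂ and x₃ ≠ x₁. Then K₁(x₁,x₂,x₃) = p^{-3} ∑_{y₁,y₂,y₃} e_p(x₁y₁² − x₂y₂² − x₃y₃² + (x₃+x₂−x₁)(y₂+y₃−y₁)² + (x₂−x₁)(y₁−y₃)) satisfies |K₁(x₁,x₂,x₃)| ≤ p^{-1}. -/

import Mathlib

open Finset Complex

/-- `e_p(x) = exp(-2πi x / p)` via the canonical lift `x.val`. -/
noncomputable def ep (p : ℕ) (x : ZMod p) : ℂ :=
  Complex.exp (-2 * Real.pi * Complex.I * (x.val : ℂ) / p)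

/-- Normalized quadratic Gauss sum kernel `K(a,b) = (1/p) ∑_y e_p(a y² + b y)`. -/
noncomputable def Kker (p : ℕ) [NeZero p] (a b : ZMod p) : ℂ :=
  (p : ℂ)⁻¹ * ∑ y : ZMod p, ep p (a * y ^ 2 + b * y)

/-- The kernel `K₁(x₁,x₂,x₃) = p^{-3} ∑_{y₁,y₂,y₃} e_p(R₁)`. -/
noncomputable def K1 (p : ℕ) [NeZero p] (x₁ x₂ x₃ : ZMod p) : ℂ :=
  ((p : ℂ) ^ 3)⁻¹ * ∑ y₁ : ZMod p, ∑ y₂ : ZMod p, ∑ y₃ : ZMod p,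
    ep p (x₁ * y₁ ^ 2 - x₂ * y₂ ^ 2 - x₃ * y₃ ^ 2 +
      (x₃ + x₂ - x₁) * (y₂ + y₃ - y₁) ^ 2 + (x₂ - x₁) * (y₁ - y₃))

lemma ep_intCast (p : ℕ) [NeZero p] (m : ℤ) :
    ep p ((m : ZMod p)) = Complex.exp (-2 * Real.pi * Complex.I * (m : ℂ) / p) := by
  have hp : (p : ℂ) ≠ 0 := Nat.cast_ne_zero.mpr (NeZero.ne p)
  obtain ⟨k, hk⟩ : ∃ k : ℤ, (((m : ZMod p).val : ℤ)) = m + p * k := by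
    have h1 : ((((m : ZMod p).val : ℤ) - m : ℤ) : ZMod p) = 0 := by
      push_cast [ZMod.natCast_val, ZMod.cast_id]
      ring
    obtain ⟨k, hk⟩ := (ZMod.intCast_zmod_eq_zero_iff_dvd _ _).mp h1
    exact ⟨k, by linarith⟩
  have hv : (((m : ZMod p).val : ℂ)) = (m : ℂ) + p * k := by
    have := congrArg (fun z : ℤ => (z : ℂ)) hk
    push_cast at this ⊢
    linear_combination this
  rw [ep, hv]
  have : -2 * (Real.pi : ℂ) * Complex.I * ((m : ℂ) + p * k) / p
      = -2 * (Real.pi : ℂ) * Complex.I * (m : ℂ) / p + (-k) * (2 * Real.pi * Complex.I) := by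
    field_simp
    ring
  rw [this, Complex.exp_add,
    show (-(k:ℂ)) * (2 * Real.pi * Complex.I) = ((-k : ℤ) : ℂ) * (2 * Real.pi * Complex.I) by
      push_cast; ring,
    Complex.exp_int_mul_two_pi_mul_I, mul_one]

lemma ep_zero (p : ℕ) [NeZero p] : ep p 0 = 1 := by
  simp [ep, ZMod.val_zero]

lemma ep_add (p : ℕ) [NeZero p] (a b : ZMod p) :
    ep p (a + b) = ep p a * ep p b := by
  have ha : a = ((a.val : ℤ) : ZMod p) := by
    push_cast [ZMod.natCast_val, ZMod.cast_id]
    rfl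
  have hb : b = ((b.val : ℤ) : ZMod p) := by
    push_cast [ZMod.natCast_val, ZMod.cast_id]
    rfl
  rw [ha, hb, ← Int.cast_add, ep_intCast, ep_intCast, ep_intCast, ← Complex.exp_add]
  congr 1
  push_cast
  ring

lemma ep_ne_one (p : ℕ) [NeZero p] (c : ZMod p) (hc : c ≠ 0) : ep p c ≠ 1 := by
  intro h
  rw [ep, Complex.exp_eq_one_iff] at h
  obtain ⟨n, hn⟩ := h
  have hp : (p : ℂ) ≠ 0 := Nat.cast_ne_zero.mpr (NeZero.ne p)
  have hπ : (Real.pi : ℂ) ≠ 0 := by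
    exact_mod_cast Complex.ofReal_ne_zero.mpr Real.pi_ne_zero
  have hI : Complex.I ≠ 0 := Complex.I_ne_zero
  have h2 : ((c.val : ℂ)) = -n * p := by
    have hn' : -2 * (Real.pi : ℂ) * Complex.I * (c.val : ℂ) = (n : ℂ) * (2 * Real.pi * Complex.I) * p := by
      have := congrArg (fun z : ℂ => z * (p : ℂ)) hn
      rw [div_mul_cancel₀ _ hp] at this
      exact this
    refine mul_left_cancel₀ (mul_ne_zero (mul_ne_zero (by norm_num : (2:ℂ) ≠ 0) hπ) hI) ?_
    show (2 * (Real.pi:ℂ) * Complex.I) * (c.val : ℂ) = (2 * (Real.pi:ℂ) * Complex.I) * (-(n:ℂ) * p)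
    linear_combination -hn'
  have h3 : ((c.val : ℝ)) = -n * p := by exact_mod_cast h2
  have hvpos : 0 < c.val := ZMod.val_pos.mpr hc
  have hvlt : c.val < p := ZMod.val_lt c
  have hppos : (0 : ℝ) < p := by exact_mod_cast Nat.pos_of_ne_zero (NeZero.ne p)
  rcases le_or_gt 0 n with hn0 | hn0
  · have : (-n : ℝ) * p ≤ 0 := mul_nonpos_of_nonpos_of_nonneg (by exact_mod_cast neg_nonpos.mpr hn0) hppos.le
    have : (c.val : ℝ) ≤ 0 := h3 ▸ this
    exact absurd (by exact_mod_cast hvpos : (0:ℝ) < c.val) (not_lt.mpr this)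
  · have hn1 : (1 : ℝ) ≤ -n := by exact_mod_cast by omega
    have : (p : ℝ) ≤ (-n : ℝ) * p := le_mul_of_one_le_left hppos.le hn1
    have hlt : (c.val : ℝ) < p := by exact_mod_cast hvlt
    linarith [h3 ▸ this]

lemma sum_ep_mul (p : ℕ) [NeZero p] (c : ZMod p) :
    ∑ y : ZMod p, ep p (c * y) = if c = 0 then (p : ℂ) else 0 := by
  split_ifs with hc
  · subst hc
    simp [ep_zero, ZMod.card]
  · have key : ep p c * (∑ y : ZMod p, ep p (c * y)) = ∑ y : ZMod p, ep p (c * y) := by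
      rw [Finset.mul_sum]
      have : ∀ y : ZMod p, ep p c * ep p (c * y) = ep p (c * (1 + y)) := by
        intro y
        rw [← ep_add]
        ring_nf
      simp_rw [this]
      exact Fintype.sum_equiv (Equiv.addLeft (1 : ZMod p)) _ _ (fun y => rfl)
    have := sub_eq_zero.mpr key
    have h2 : (ep p c - 1) * (∑ y : ZMod p, ep p (c * y)) = 0 := by ring_nf; linear_combination this
    rcases mul_eq_zero.mp h2 with h | h
    · exact absurd (sub_eq_zero.mp h) (ep_ne_one p c hc)
    · exact h

theorem K1_bound_of_eq (p : ℕ) [Fact p.Prime] (hodd : Odd p)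
    (x₁ x₂ x₃ : ZMod p) (h : x₁ = x₂) (hne : x₃ ≠ x₁) :
    ‖K1 p x₁ x₂ x₃‖ ≤ (p : ℝ)⁻¹ := by
  subst h
  have hp : p.Prime := Fact.out
  have hp0 : (p : ℂ) ≠ 0 := Nat.cast_ne_zero.mpr hp.pos.ne'
  have h2 : (2 : ZMod p) ≠ 0 := by
    intro hc
    have : (p : ℕ) ∣ 2 := by
      have := (ZMod.natCast_eq_zero_iff 2 p).mp (by exact_mod_cast hc)
      exact this
    have hp2 : p = 2 := by
      have := Nat.le_of_dvd (by norm_num) this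
      have := hp.two_le
      omega
    rw [hp2] at hodd
    exact (Nat.not_odd_iff_even.mpr (by norm_num)) hodd
  have inner : ∀ y₁ y₂ : ZMod p, (∑ y₃ : ZMod p,
      ep p (x₁ * y₁ ^ 2 - x₁ * y₂ ^ 2 - x₃ * y₃ ^ 2 +
        (x₃ + x₁ - x₁) * (y₂ + y₃ - y₁) ^ 2 + (x₁ - x₁) * (y₁ - y₃)))
      = ep p (x₁ * y₁ ^ 2 - x₁ * y₂ ^ 2 + x₃ * (y₂ - y₁) ^ 2) *
        (if 2 * x₃ * (y₂ - y₁) = 0 then (p : ℂ) else 0) := by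
    intro y₁ y₂
    have harg : ∀ y₃ : ZMod p,
        x₁ * y₁ ^ 2 - x₁ * y₂ ^ 2 - x₃ * y₃ ^ 2 +
          (x₃ + x₁ - x₁) * (y₂ + y₃ - y₁) ^ 2 + (x₁ - x₁) * (y₁ - y₃)
        = (x₁ * y₁ ^ 2 - x₁ * y₂ ^ 2 + x₃ * (y₂ - y₁) ^ 2) + (2 * x₃ * (y₂ - y₁)) * y₃ := by
      intro y₃; ring
    simp_rw [harg, ep_add, ← Finset.mul_sum, sum_ep_mul]
  have hS : (∑ y₁ : ZMod p, ∑ y₂ : ZMod p, ∑ y₃ : ZMod p,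
      ep p (x₁ * y₁ ^ 2 - x₁ * y₂ ^ 2 - x₃ * y₃ ^ 2 +
        (x₃ + x₁ - x₁) * (y₂ + y₃ - y₁) ^ 2 + (x₁ - x₁) * (y₁ - y₃)))
      = (p : ℂ) ^ 2 := by
    simp_rw [inner]
    by_cases h3 : x₃ = 0
    · -- x₃ = 0, so x₁ ≠ 0
      have hx1 : x₁ ≠ 0 := fun h0 => hne (h3.trans h0.symm)
      subst h3
      have hsimp : ∀ y₁ y₂ : ZMod p,
          ep p (x₁ * y₁ ^ 2 - x₁ * y₂ ^ 2 + 0 * (y₂ - y₁) ^ 2) *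
            (if 2 * 0 * (y₂ - y₁) = 0 then (p : ℂ) else 0)
          = ep p (x₁ * y₁ ^ 2 - x₁ * y₂ ^ 2) * (p : ℂ) := by
        intro y₁ y₂
        rw [if_pos (by ring)]
        congr 2
        ring
      simp_rw [hsimp, ← Finset.sum_mul]
      have hmain : (∑ y₁ : ZMod p, ∑ y₂ : ZMod p, ep p (x₁ * y₁ ^ 2 - x₁ * y₂ ^ 2)) = (p : ℂ) := by
        have step1 : ∀ y₁ : ZMod p, (∑ y₂ : ZMod p, ep p (x₁ * y₁ ^ 2 - x₁ * y₂ ^ 2))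
            = ∑ t : ZMod p, ep p (-(x₁ * t ^ 2)) * ep p ((-(2 * x₁ * t)) * y₁) := by
          intro y₁
          rw [← Fintype.sum_equiv (Equiv.addLeft y₁)
            (fun t => ep p (x₁ * y₁ ^ 2 - x₁ * (y₁ + t) ^ 2))
            (fun y₂ => ep p (x₁ * y₁ ^ 2 - x₁ * y₂ ^ 2)) (fun t => rfl)]
          refine Finset.sum_congr rfl fun t _ => ?_
          rw [← ep_add]
          congr 1
          ring
        simp_rw [step1]
        rw [Finset.sum_comm]
        have step2 : ∀ t : ZMod p, (∑ y₁ : ZMod p, ep p (-(x₁ * t ^ 2)) * ep p ((-(2 * x₁ * t)) * y₁))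
            = ep p (-(x₁ * t ^ 2)) * (if t = 0 then (p : ℂ) else 0) := by
          intro t
          rw [← Finset.mul_sum, sum_ep_mul]
          congr 1
          have : (-(2 * x₁ * t) = 0) ↔ (t = 0) := by
            simp [mul_eq_zero, h2, hx1]
          simp [this]
        simp_rw [step2]
        simp only [mul_ite, mul_zero]
        rw [Finset.sum_ite_eq' Finset.univ (0 : ZMod p)
          (fun t => ep p (-(x₁ * t ^ 2)) * (p : ℂ))]
        simp [ep_zero]
      rw [hmain, sq]
    · -- x₃ ≠ 0
      have hcond : ∀ y₁ y₂ : ZMod p, (2 * x₃ * (y₂ - y₁) = 0) ↔ (y₂ = y₁) := by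
        intro y₁ y₂
        rw [mul_eq_zero, mul_eq_zero, sub_eq_zero]
        simp [h2, h3]
      simp_rw [hcond]
      have step : ∀ y₁ : ZMod p, (∑ y₂ : ZMod p,
          ep p (x₁ * y₁ ^ 2 - x₁ * y₂ ^ 2 + x₃ * (y₂ - y₁) ^ 2) *
            (if y₂ = y₁ then (p : ℂ) else 0)) = (p : ℂ) := by
        intro y₁
        rw [Finset.sum_eq_single y₁]
        · simp [ep_zero]
        · intro b _ hb
          simp [hb]
        · intro hb
          exact absurd (Finset.mem_univ y₁) hb
      simp_rw [step]
      simp [sq, ZMod.card]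
  rw [K1, hS]
  have : ((p : ℂ) ^ 3)⁻¹ * (p : ℂ) ^ 2 = (p : ℂ)⁻¹ := by
    field_simp
  rw [this, norm_inv, Complex.norm_natCast]
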